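/- Let Y_{i,j} denote the forest on I with exactly one inner vertex whose two ancestor leaves are i and j (all other labels being single-leaf trees), and let F be a forest with j ∉ Supp(F). Then the forests F' with V(F') = V(F) ⊔ {v}, F ∈ γ(F', V(F)) and Y_{i,j} ∈ γ(F', {v}), are exactly the forests obtained from F by grafting the leaf j onto one of the edges on the path from leaf i to its root. In particular there are exactly d(i,F)+1 such forests, where d(i,F) is the number of inner vertices on the path from i to its root in F. -/

import Mathlib

open Finset

/-- A forest of leaf-labeled rooted binary trees on a ground set of labels,
encoded by the family of "clades": for each inner vertex, the set of its
ancestor leaves. Laminarity plus the binary splitting condition exactly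
characterize such forests, and inner vertices correspond bijectively to clades. -/
structure Forest (I : Type*) [DecidableEq I] where
  ground : Finset I
  clades : Finset (Finset I)
  subset_ground : ∀ C ∈ clades, C ⊆ ground
  laminar : ∀ C ∈ clades, ∀ D ∈ clades, C ⊆ D ∨ D ⊆ C ∨ Disjoint C D
  binary : ∀ C ∈ clades, ∃ A B : Finset I,
      (A ∈ clades ∨ ∃ x, A = {x}) ∧ (B ∈ clades ∨ ∃ x, B = {x}) ∧
      Disjoint A B ∧ A ∪ B = C ∧ A ≠ C ∧ B ≠ C

namespace Forest

variable {I : Type*} [DecidableEq I]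

/-- The partial order on forests of the paper: `F' ≤ F` iff there is an injection
of the inner vertices of `F'` into those of `F` which enlarges ancestor-leaf sets
and preserves the ancestor relation among inner vertices. -/
def Le (F' F : Forest I) : Prop :=
  F'.ground = F.ground ∧ ∃ φ : Finset I → Finset I,
    Set.InjOn φ (F'.clades : Set (Finset I)) ∧
    (∀ C ∈ F'.clades, φ C ∈ F.clades) ∧
    (∀ C ∈ F'.clades, C ⊆ φ C) ∧
    (∀ C ∈ F'.clades, ∀ D ∈ F'.clades, C ⊆ D → φ C ⊆ φ D)

/-- `γ(F,V)`: the set of forests `F' ≤ F` whose inner vertices are identified,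
via the order-defining injection, with the subset `V` of inner vertices of `F`. -/
def gamma (F : Forest I) (V : Finset (Finset I)) : Set (Forest I) :=
  {F' | F'.ground = F.ground ∧ ∃ φ : Finset I → Finset I,
    Set.InjOn φ (F'.clades : Set (Finset I)) ∧
    (∀ C ∈ F'.clades, φ C ∈ F.clades) ∧
    (∀ C ∈ F'.clades, C ⊆ φ C) ∧
    (∀ C ∈ F'.clades, ∀ D ∈ F'.clades, C ⊆ D → φ C ⊆ φ D) ∧
    F'.clades.image φ = V}

/-- A forest consisting of a single tree. -/
def IsTree (F : Forest I) : Prop :=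
  F.ground.Nonempty ∧ (F.ground ∈ F.clades ∨ F.ground.card = 1)

/-- The support: leaves whose path to the root contains at least one inner vertex. -/
def supp (F : Forest I) : Finset I := F.clades.sup id

/-- The leaf-label sets of the trees of the forest: maximal clades together with
the singletons of labels not lying in any clade. -/
def rootBlocks (F : Forest I) : Finset (Finset I) :=
  F.clades.filter (fun C => ∀ D ∈ F.clades, C ⊆ D → C = D) ∪
  (F.ground.filter (fun x => ∀ C ∈ F.clades, x ∉ C)).image
    (fun x => ({x} : Finset I))

end Forest

/-- The forest `Y_{i,j}`: exactly one inner vertex, whose two ancestor leaves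
are `i` and `j`; all other labels are single-leaf trees. -/
def pairForest (I : Type*) [Fintype I] [DecidableEq I] (i j : I) (h : i ≠ j) :
    Forest I where
  ground := Finset.univ
  clades := {({i, j} : Finset I)}
  subset_ground := fun C _ => Finset.subset_univ C
  laminar := by
    intro C hC D hD
    simp only [Finset.mem_singleton] at hC hD
    subst hC; subst hD; exact Or.inl (subset_refl _)
  binary := by
    intro C hC
    simp only [Finset.mem_singleton] at hC
    subst hC
    refine ⟨{i}, {j}, Or.inr ⟨i, rfl⟩, Or.inr ⟨j, rfl⟩, ?_, ?_, ?_, ?_⟩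
    · simpa using h
    · rfl
    · intro hcon
      have : j ∈ ({i} : Finset I) := by rw [hcon]; simp
      simp at this; exact h this.symm
    · intro hcon
      have : i ∈ ({j} : Finset I) := by rw [hcon]; simp
      simp at this; exact h this

section Aux

variable {I : Type*} [DecidableEq I]

open Finset

lemma Forest.clade_nonempty (G : Forest I) {C : Finset I} (hC : C ∈ G.clades) :
    C.Nonempty := by
  obtain ⟨A, B, hA, hB, hd, hU, hAne, hBne⟩ := G.binary C hC
  rcases C.eq_empty_or_nonempty with rfl | h
  · exact absurd (Finset.subset_empty.mp (hU ▸ Finset.subset_union_left)) hAne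
  · exact h

lemma Forest.two_le_card (G : Forest I) {C : Finset I} (hC : C ∈ G.clades) :
    2 ≤ C.card := by
  obtain ⟨A, B, hA, hB, hd, hU, hAne, hBne⟩ := G.binary C hC
  have hAne' : A.Nonempty := by
    rcases A.eq_empty_or_nonempty with rfl | h
    · rw [Finset.empty_union] at hU; exact absurd hU hBne
    · exact h
  have hBne' : B.Nonempty := by
    rcases B.eq_empty_or_nonempty with rfl | h
    · rw [Finset.union_empty] at hU; exact absurd hU hAne
    · exact h
  have := Finset.card_union_of_disjoint hd
  rw [hU] at this
  have h1 := Finset.card_pos.mpr hAne'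
  have h2 := Finset.card_pos.mpr hBne'
  omega

lemma compat (G : Forest I) {D A : Finset I} (hD : D ∈ G.clades)
    (hA : A ∈ G.clades ∨ ∃ x, A = {x}) : D ⊆ A ∨ A ⊆ D ∨ Disjoint D A := by
  rcases hA with hA | ⟨x, rfl⟩
  · exact G.laminar D hD A hA
  · by_cases hx : x ∈ D
    · exact Or.inr (Or.inl (Finset.singleton_subset_iff.mpr hx))
    · exact Or.inr (Or.inr (Finset.disjoint_singleton_right.mpr hx))

lemma sub_split {A B N D : Finset I} (hd : Disjoint A B) (hU : A ∪ B = D)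
    (hND : N ⊆ D) (hne : N ≠ D)
    (hA : N ⊆ A ∨ A ⊆ N ∨ Disjoint N A)
    (hB : N ⊆ B ∨ B ⊆ N ∨ Disjoint N B) : N ⊆ A ∨ N ⊆ B := by
  rcases hA with h | h | h
  · exact Or.inl h
  · rcases hB with h' | h' | h'
    · exact Or.inr h'
    · exact absurd (Finset.Subset.antisymm hND (hU ▸ Finset.union_subset h h')) hne
    · refine Or.inl fun x hx => ?_
      have hxD : x ∈ A ∪ B := hU ▸ hND hx
      rcases Finset.mem_union.mp hxD with h'' | h''
      · exact h''
      · exact absurd h'' (Finset.disjoint_left.mp h' hx)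
  · refine Or.inr fun x hx => ?_
    have hxD : x ∈ A ∪ B := hU ▸ hND hx
    rcases Finset.mem_union.mp hxD with h'' | h''
    · exact absurd h'' (Finset.disjoint_left.mp h hx)
    · exact h''

lemma Forest.L1 (G : Forest I) (C : Finset I) (hC : C ∈ G.clades) :
    (G.clades.filter (· ⊆ C)).card = C.card - 1 := by
  induction C using Finset.strongInduction with
  | _ C IH =>
  obtain ⟨A, B, hA, hB, hd, hU, hAne, hBne⟩ := G.binary C hC
  have hAC : A ⊆ C := hU ▸ Finset.subset_union_left
  have hBC : B ⊆ C := hU ▸ Finset.subset_union_right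
  have hAne' : A.Nonempty := by
    rcases A.eq_empty_or_nonempty with rfl | h
    · rw [Finset.empty_union] at hU; exact absurd hU hBne
    · exact h
  have hBne' : B.Nonempty := by
    rcases B.eq_empty_or_nonempty with rfl | h
    · rw [Finset.union_empty] at hU; exact absurd hU hAne
    · exact h
  have cardA : (G.clades.filter (· ⊆ A)).card = A.card - 1 := by
    rcases hA with hA | ⟨x, rfl⟩
    · exact IH A ⟨hAC, fun h => hAne (Finset.Subset.antisymm hAC h)⟩ hA
    · rw [Finset.card_singleton]
      rw [Finset.card_eq_zero]
      apply Finset.eq_empty_of_forall_notMem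
      intro D hD
      obtain ⟨hD1, hD2⟩ := Finset.mem_filter.mp hD
      have := G.two_le_card hD1
      have := Finset.card_le_card hD2
      simp at this; omega
  have cardB : (G.clades.filter (· ⊆ B)).card = B.card - 1 := by
    rcases hB with hB | ⟨x, rfl⟩
    · exact IH B ⟨hBC, fun h => hBne (Finset.Subset.antisymm hBC h)⟩ hB
    · rw [Finset.card_singleton]
      rw [Finset.card_eq_zero]
      apply Finset.eq_empty_of_forall_notMem
      intro D hD
      obtain ⟨hD1, hD2⟩ := Finset.mem_filter.mp hD
      have := G.two_le_card hD1
      have := Finset.card_le_card hD2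
      simp at this; omega
  have hsplit : G.clades.filter (· ⊆ C) =
      insert C ((G.clades.filter (· ⊆ A)) ∪ (G.clades.filter (· ⊆ B))) := by
    ext D
    simp only [Finset.mem_filter, Finset.mem_insert, Finset.mem_union]
    constructor
    · rintro ⟨hDcl, hDC⟩
      by_cases hDeq : D = C
      · exact Or.inl hDeq
      · refine Or.inr ?_
        rcases sub_split hd hU hDC hDeq (compat G hDcl hA) (compat G hDcl hB) with h | h
        · exact Or.inl ⟨hDcl, h⟩
        · exact Or.inr ⟨hDcl, h⟩
    · rintro (rfl | ⟨hDcl, hDA⟩ | ⟨hDcl, hDB⟩)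
      · exact ⟨hC, Finset.Subset.refl _⟩
      · exact ⟨hDcl, hDA.trans hAC⟩
      · exact ⟨hDcl, hDB.trans hBC⟩
  have hCnot : C ∉ (G.clades.filter (· ⊆ A)) ∪ (G.clades.filter (· ⊆ B)) := by
    intro h
    rcases Finset.mem_union.mp h with h | h
    · exact hAne (Finset.Subset.antisymm hAC (Finset.mem_filter.mp h).2)
    · exact hBne (Finset.Subset.antisymm hBC (Finset.mem_filter.mp h).2)
  have hdisjAB : Disjoint (G.clades.filter (· ⊆ A)) (G.clades.filter (· ⊆ B)) := by
    rw [Finset.disjoint_left]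
    intro D h1 h2
    obtain ⟨hDcl, hDA⟩ := Finset.mem_filter.mp h1
    obtain ⟨_, hDB⟩ := Finset.mem_filter.mp h2
    obtain ⟨x, hx⟩ := G.clade_nonempty hDcl
    exact Finset.disjoint_left.mp hd (hDA hx) (hDB hx)
  rw [hsplit, Finset.card_insert_of_notMem hCnot, Finset.card_union_of_disjoint hdisjAB,
    cardA, cardB]
  have hCcard : C.card = A.card + B.card := by
    rw [← hU, Finset.card_union_of_disjoint hd]
  have h1 := Finset.card_pos.mpr hAne'
  have h2 := Finset.card_pos.mpr hBne'
  omega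

end Aux
section Aux2

variable {I : Type*} [DecidableEq I]

open Finset

lemma laminar_card_le :
    ∀ (n : ℕ) (L : Finset (Finset I)) (S : Finset I), L.card ≤ n →
    (∀ A ∈ L, ∀ B ∈ L, A ⊆ B ∨ B ⊆ A ∨ Disjoint A B) →
    (∀ A ∈ L, A ⊆ S) → (∀ A ∈ L, 2 ≤ A.card) → L.card ≤ S.card - 1 := by
  intro n
  induction n with
  | zero => intro L S h _ _ _; omega
  | succ n IH =>
    intro L S hn hlam hsub hcard
    rcases L.eq_empty_or_nonempty with rfl | hne
    · simp
    obtain ⟨A, hAL, hAmin⟩ := L.exists_minimal hne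
    obtain ⟨x, hx, y, hy, hxy⟩ := Finset.one_lt_card.mp (hcard A hAL)
    have key : ∀ B ∈ L.erase A, (A ⊆ B ∧ x ∈ B) ∨ (Disjoint A B ∧ x ∉ B) := by
      intro B hB
      obtain ⟨hBne, hBL⟩ := Finset.mem_erase.mp hB
      rcases hlam A hAL B hBL with h | h | h
      · exact Or.inl ⟨h, h hx⟩
      · exact absurd (Finset.lt_iff_ssubset.mpr ⟨h, fun h' => hBne (Finset.Subset.antisymm h h')⟩)
          (fun hlt => (lt_irrefl A) (lt_of_le_of_lt (hAmin hBL hlt.le) hlt))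
      · exact Or.inr ⟨h, Finset.disjoint_left.mp h hx⟩
    set L' := (L.erase A).image (fun B => B.erase x) with hL'
    have hinj : Set.InjOn (fun B => B.erase x) (L.erase A : Set (Finset I)) := by
      intro B₁ h₁ B₂ h₂ heq
      simp only [Finset.coe_erase, Set.mem_diff, Finset.mem_coe] at h₁ h₂
      have h₁' : B₁ ∈ L.erase A := Finset.mem_erase.mpr ⟨by simpa using h₁.2, h₁.1⟩
      have h₂' : B₂ ∈ L.erase A := Finset.mem_erase.mpr ⟨by simpa using h₂.2, h₂.1⟩
      simp only at heq
      rcases key B₁ h₁' with ⟨hs₁, hx₁⟩ | ⟨hd₁, hx₁⟩ <;>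
        rcases key B₂ h₂' with ⟨hs₂, hx₂⟩ | ⟨hd₂, hx₂⟩
      · rw [← Finset.insert_erase hx₁, ← Finset.insert_erase hx₂, heq]
      · exfalso
        have hyB₂ : y ∈ B₂ := by
          rw [Finset.erase_eq_of_notMem hx₂] at heq
          rw [← heq]
          exact Finset.mem_erase.mpr ⟨fun h => hxy h.symm, hs₁ hy⟩
        exact Finset.disjoint_left.mp hd₂ hy hyB₂
      · exfalso
        have hyB₁ : y ∈ B₁ := by
          rw [Finset.erase_eq_of_notMem hx₁] at heq
          rw [heq]
          exact Finset.mem_erase.mpr ⟨fun h => hxy h.symm, hs₂ hy⟩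
        exact Finset.disjoint_left.mp hd₁ hy hyB₁
      · rw [← Finset.erase_eq_of_notMem hx₁, ← Finset.erase_eq_of_notMem hx₂, heq]
    have hL'card : L'.card = L.card - 1 := by
      rw [hL', Finset.card_image_of_injOn hinj, Finset.card_erase_of_mem hAL]
    have hrec : L'.card ≤ (S.erase x).card - 1 := by
      apply IH L' (S.erase x)
      · have := Finset.card_pos.mpr hne; omega
      · intro A' hA' B' hB'
        obtain ⟨B₁, hB₁, rfl⟩ := Finset.mem_image.mp hA'
        obtain ⟨B₂, hB₂, rfl⟩ := Finset.mem_image.mp hB'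
        rcases hlam B₁ (Finset.mem_of_mem_erase hB₁) B₂ (Finset.mem_of_mem_erase hB₂)
          with h | h | h
        · exact Or.inl (Finset.erase_subset_erase x h)
        · exact Or.inr (Or.inl (Finset.erase_subset_erase x h))
        · exact Or.inr (Or.inr (h.mono (Finset.erase_subset x B₁) (Finset.erase_subset x B₂)))
      · intro A' hA'
        obtain ⟨B, hB, rfl⟩ := Finset.mem_image.mp hA'
        exact Finset.erase_subset_erase x (hsub B (Finset.mem_of_mem_erase hB))
      · intro A' hA'
        obtain ⟨B, hB, rfl⟩ := Finset.mem_image.mp hA'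
        rcases key B hB with ⟨hs, hxB⟩ | ⟨hd, hxB⟩
        · have hAB : A ⊂ B := ⟨hs, fun h =>
            (Finset.mem_erase.mp hB).1 (Finset.Subset.antisymm h hs)⟩
          have := Finset.card_lt_card hAB
          have := hcard A hAL
          rw [Finset.card_erase_of_mem hxB]
          omega
        · rw [Finset.erase_eq_of_notMem hxB]
          exact hcard B (Finset.mem_of_mem_erase hB)
    have hxS : x ∈ S := hsub A hAL hx
    have hS2 : 2 ≤ S.card := by
      have : ({x, y} : Finset I) ⊆ S := by
        intro z hz
        rcases Finset.mem_insert.mp hz with rfl | hz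
        · exact hxS
        · exact hsub A hAL (Finset.mem_singleton.mp hz ▸ hy)
      have := Finset.card_le_card this
      rwa [Finset.card_pair hxy] at this
    rw [Finset.card_erase_of_mem hxS] at hrec
    have := Finset.card_pos.mpr hne
    omega

end Aux2
section Key

variable {I : Type*} [DecidableEq I]

open Finset

lemma key_lemma (F F' : Forest I) (j : I) (M : Finset I) (φ : Finset I → Finset I)
    (hjF : ∀ C ∈ F.clades, j ∉ C) (hM' : M ∈ F'.clades) (hjM : j ∈ M)
    (hinj : Set.InjOn φ (F.clades : Set (Finset I)))
    (hmem : ∀ C ∈ F.clades, φ C ∈ F'.clades)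
    (hsub : ∀ C ∈ F.clades, C ⊆ φ C)
    (hmono : ∀ C ∈ F.clades, ∀ D ∈ F.clades, C ⊆ D → φ C ⊆ φ D)
    (hMim : M ∉ F.clades.image φ)
    (hcl : F'.clades = insert M (F.clades.image φ)) :
    ∀ C ∈ F.clades, φ C \ {j} = C ∧ (j ∈ φ C → M ⊂ φ C) := by
  suffices H : ∀ n, ∀ C ∈ F.clades, (φ C).card ≤ n →
      φ C \ {j} = C ∧ (j ∈ φ C → M ⊂ φ C) by
    intro C hC; exact H (φ C).card C hC le_rfl
  intro n
  induction n with
  | zero =>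
    intro C hC h0
    obtain ⟨x, hx⟩ := F.clade_nonempty hC
    have : x ∈ φ C := hsub C hC hx
    have := Finset.card_pos.mpr ⟨x, this⟩
    omega
  | succ n IH =>
    intro C hC hcard
    have hE' : φ C ∈ F'.clades := hmem C hC
    have hCE : C ⊆ φ C := hsub C hC
    have hjC : j ∉ C := hjF C hC
    have hC2 : 2 ≤ C.card := F.two_le_card hC
    have hME : M ≠ φ C := fun h => hMim (h ▸ Finset.mem_image_of_mem φ hC)
    have hU : (F'.clades.filter (· ⊆ φ C)).card = (φ C).card - 1 :=
      F'.L1 (φ C) hE'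
    set T := F.clades.filter (fun D => φ D ⊂ φ C) with hT
    have hTsub : ∀ D ∈ T, D ∈ F.clades := fun D hD => (Finset.mem_filter.mp hD).1
    have hTim_card : (T.image φ).card = T.card :=
      Finset.card_image_of_injOn (hinj.mono (by intro D hD; exact hTsub D hD))
    -- splitting of T
    have hT1 : T.filter (· ⊆ C) = (F.clades.filter (· ⊆ C)).erase C := by
      ext D
      simp only [hT, Finset.mem_filter, Finset.mem_erase]
      constructor
      · rintro ⟨⟨hDcl, hDlt⟩, hDC⟩
        exact ⟨fun h => (ssubset_irrefl (φ C)) (h ▸ hDlt), hDcl, hDC⟩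
      · rintro ⟨hDne, hDcl, hDC⟩
        refine ⟨⟨hDcl, ?_⟩, hDC⟩
        refine ⟨hmono D hDcl C hC hDC, fun h => hDne ?_⟩
        exact hinj (by exact hDcl) (by exact hC)
          (Finset.Subset.antisymm (hmono D hDcl C hC hDC) h)
      done
    have hT1card : (T.filter (· ⊆ C)).card = C.card - 2 := by
      have hCmem : C ∈ F.clades.filter (· ⊆ C) :=
        Finset.mem_filter.mpr ⟨hC, Finset.Subset.refl C⟩
      rw [hT1, Finset.card_erase_of_mem hCmem, F.L1 C hC]
      omega
    have hTsplit : T = T.filter (· ⊆ C) ∪ T.filter (fun D => Disjoint D C) := by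
      apply Finset.Subset.antisymm
      · intro D hD
        obtain ⟨hDcl, hDlt⟩ := Finset.mem_filter.mp hD
        rcases F.laminar D hDcl C hC with h | h | h
        · exact Finset.mem_union_left _ (Finset.mem_filter.mpr ⟨hD, h⟩)
        · exfalso
          by_cases hDC : D = C
          · exact (ssubset_irrefl (φ C)) (hDC ▸ hDlt)
          · exact (ssubset_irrefl (φ C))
              ((hmono C hC D hDcl h).trans_ssubset hDlt)
        · exact Finset.mem_union_right _ (Finset.mem_filter.mpr ⟨hD, h⟩)
      · intro D hD
        rcases Finset.mem_union.mp hD with h | h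
        · exact (Finset.mem_filter.mp h).1
        · exact (Finset.mem_filter.mp h).1
    have hTdisj : Disjoint (T.filter (· ⊆ C)) (T.filter (fun D => Disjoint D C)) := by
      rw [Finset.disjoint_left]
      intro D h1 h2
      obtain ⟨hD1, hDC⟩ := Finset.mem_filter.mp h1
      obtain ⟨_, hDd⟩ := Finset.mem_filter.mp h2
      obtain ⟨x, hx⟩ := F.clade_nonempty (hTsub D hD1)
      exact Finset.disjoint_left.mp hDd hx (hDC hx)
    have hTcard : T.card = (C.card - 2) + (T.filter (fun D => Disjoint D C)).card := by
      rw [← hT1card, ← Finset.card_union_of_disjoint hTdisj, ← hTsplit]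
    -- the disjoint part lands in W
    have hT2W : ∀ D ∈ T.filter (fun D => Disjoint D C), D ⊆ (φ C) \ (insert j C) := by
      intro D hD
      obtain ⟨hDT, hDd⟩ := Finset.mem_filter.mp hD
      obtain ⟨hDcl, hDlt⟩ := Finset.mem_filter.mp hDT
      intro x hx
      refine Finset.mem_sdiff.mpr ⟨hDlt.subset (hsub D hDcl hx), ?_⟩
      intro hmem'
      rcases Finset.mem_insert.mp hmem' with rfl | hxC
      · exact hjF D hDcl hx
      · exact Finset.disjoint_left.mp hDd hx hxC
    have hT2bound : (T.filter (fun D => Disjoint D C)).card ≤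
        ((φ C) \ (insert j C)).card - 1 := by
      apply laminar_card_le (T.filter (fun D => Disjoint D C)).card _ _ le_rfl
      · intro A hA B hB
        exact F.laminar A (hTsub A (Finset.mem_filter.mp hA).1) B
          (hTsub B (Finset.mem_filter.mp hB).1)
      · exact hT2W
      · intro A hA
        exact F.two_le_card (hTsub A (Finset.mem_filter.mp hA).1)
    by_cases hjE : j ∈ φ C
    · -- j ∈ φ C : M and φ C are comparable
      have hMcmp : M ⊂ φ C ∨ φ C ⊂ M := by
        rcases F'.laminar M hM' (φ C) hE' with h | h | h
        · exact Or.inl ⟨h, fun h' => hME (Finset.Subset.antisymm h h')⟩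
        · exact Or.inr ⟨h, fun h' => hME (Finset.Subset.antisymm h' h)⟩
        · exact absurd hjE (Finset.disjoint_left.mp h hjM)
      have hins : insert j C ⊆ φ C := Finset.insert_subset hjE hCE
      have hWcard : ((φ C) \ (insert j C)).card = (φ C).card - (C.card + 1) := by
        rw [Finset.card_sdiff_of_subset hins, Finset.card_insert_of_notMem hjC]
      have hinscard : C.card + 1 ≤ (φ C).card := by
        have := Finset.card_le_card hins
        rwa [Finset.card_insert_of_notMem hjC] at this
      rcases hMcmp with hMlt | hElt
      · -- good case: count with M
        have hUdec : F'.clades.filter (· ⊆ φ C) = insert (φ C) (insert M (T.image φ)) := by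
          ext D'
          simp only [Finset.mem_filter, Finset.mem_insert]
          constructor
          · rintro ⟨hD'cl, hD'sub⟩
            rw [hcl] at hD'cl
            rcases Finset.mem_insert.mp hD'cl with rfl | hD'im
            · exact Or.inr (Or.inl rfl)
            · obtain ⟨D, hD, rfl⟩ := Finset.mem_image.mp hD'im
              by_cases h : φ D = φ C
              · exact Or.inl h
              · exact Or.inr (Or.inr (Finset.mem_image_of_mem φ
                  (Finset.mem_filter.mpr ⟨hD, Finset.ssubset_iff_subset_ne.mpr ⟨hD'sub, h⟩⟩)))
          · rintro (rfl | rfl | hD'im)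
            · exact ⟨hE', Finset.Subset.refl _⟩
            · exact ⟨hM', hMlt.subset⟩
            · obtain ⟨D, hD, rfl⟩ := Finset.mem_image.mp hD'im
              obtain ⟨hDcl, hDlt⟩ := Finset.mem_filter.mp hD
              exact ⟨hmem D hDcl, hDlt.subset⟩
        have hEnot : φ C ∉ insert M (T.image φ) := by
          intro h
          rcases Finset.mem_insert.mp h with h | h
          · exact hME h.symm
          · obtain ⟨D, hD, hφD⟩ := Finset.mem_image.mp h
            exact (ssubset_irrefl (φ C)) (hφD ▸ (Finset.mem_filter.mp hD).2)
        have hMnot : M ∉ T.image φ := fun h =>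
          hMim (Finset.image_subset_image (Finset.filter_subset _ _) h)
        rw [hUdec, Finset.card_insert_of_notMem hEnot,
          Finset.card_insert_of_notMem hMnot, hTim_card] at hU
        -- now: T.card + 2 = (φ C).card - 1
        have hfin : (φ C).card = C.card + 1 := by omega
        have hEeq : φ C = insert j C := by
          apply (Finset.eq_of_subset_of_card_le hins ?_).symm
          rw [Finset.card_insert_of_notMem hjC, hfin]
        constructor
        · rw [hEeq, Finset.sdiff_singleton_eq_erase, Finset.erase_insert hjC]
        · exact fun _ => hMlt
      · -- contradiction case: φ C ⊂ M
        exfalso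
        have hUdec : F'.clades.filter (· ⊆ φ C) = insert (φ C) (T.image φ) := by
          ext D'
          simp only [Finset.mem_filter, Finset.mem_insert]
          constructor
          · rintro ⟨hD'cl, hD'sub⟩
            rw [hcl] at hD'cl
            rcases Finset.mem_insert.mp hD'cl with h | hD'im
            · exfalso
              rw [h] at hD'sub
              exact (ssubset_irrefl M) (Finset.ssubset_of_subset_of_ssubset hD'sub hElt)
            · obtain ⟨D, hD, rfl⟩ := Finset.mem_image.mp hD'im
              by_cases h : φ D = φ C
              · exact Or.inl h
              · exact Or.inr (Finset.mem_image_of_mem φ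
                  (Finset.mem_filter.mpr ⟨hD, Finset.ssubset_iff_subset_ne.mpr ⟨hD'sub, h⟩⟩))
          · rintro (rfl | hD'im)
            · exact ⟨hE', Finset.Subset.refl _⟩
            · obtain ⟨D, hD, rfl⟩ := Finset.mem_image.mp hD'im
              obtain ⟨hDcl, hDlt⟩ := Finset.mem_filter.mp hD
              exact ⟨hmem D hDcl, hDlt.subset⟩
        have hEnot : φ C ∉ T.image φ := by
          intro h
          obtain ⟨D, hD, hφD⟩ := Finset.mem_image.mp h
          exact (ssubset_irrefl (φ C)) (hφD ▸ (Finset.mem_filter.mp hD).2)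
        rw [hUdec, Finset.card_insert_of_notMem hEnot, hTim_card] at hU
        omega
    · -- j ∉ φ C : conclude φ C = C
      have hUdec : F'.clades.filter (· ⊆ φ C) = insert (φ C) (T.image φ) := by
        ext D'
        simp only [Finset.mem_filter, Finset.mem_insert]
        constructor
        · rintro ⟨hD'cl, hD'sub⟩
          rw [hcl] at hD'cl
          rcases Finset.mem_insert.mp hD'cl with rfl | hD'im
          · exact absurd (hD'sub hjM) hjE
          · obtain ⟨D, hD, rfl⟩ := Finset.mem_image.mp hD'im
            by_cases h : φ D = φ C
            · exact Or.inl h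
            · exact Or.inr (Finset.mem_image_of_mem φ
                (Finset.mem_filter.mpr ⟨hD, Finset.ssubset_iff_subset_ne.mpr ⟨hD'sub, h⟩⟩))
        · rintro (rfl | hD'im)
          · exact ⟨hE', Finset.Subset.refl _⟩
          · obtain ⟨D, hD, rfl⟩ := Finset.mem_image.mp hD'im
            obtain ⟨hDcl, hDlt⟩ := Finset.mem_filter.mp hD
            exact ⟨hmem D hDcl, hDlt.subset⟩
      have hEnot : φ C ∉ T.image φ := by
        intro h
        obtain ⟨D, hD, hφD⟩ := Finset.mem_image.mp h
        exact (ssubset_irrefl (φ C)) (hφD ▸ (Finset.mem_filter.mp hD).2)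
      rw [hUdec, Finset.card_insert_of_notMem hEnot, hTim_card] at hU
      have hWcard : ((φ C) \ (insert j C)).card = (φ C).card - C.card := by
        have : (φ C) \ (insert j C) = (φ C) \ C := by
          ext x
          simp only [Finset.mem_sdiff, Finset.mem_insert]
          constructor
          · rintro ⟨h1, h2⟩; exact ⟨h1, fun h => h2 (Or.inr h)⟩
          · rintro ⟨h1, h2⟩
            exact ⟨h1, fun h => by
              rcases h with rfl | h
              · exact hjE h1
              · exact h2 h⟩
        rw [this, Finset.card_sdiff_of_subset hCE]
      have hce : C.card ≤ (φ C).card := Finset.card_le_card hCE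
      have hfin : (φ C).card = C.card := by omega
      have hEeq : φ C = C := (Finset.eq_of_subset_of_card_le hCE (le_of_eq hfin)).symm
      constructor
      · rw [hEeq, Finset.sdiff_singleton_eq_erase, Finset.erase_eq_of_notMem hjC]
      · exact fun h => absurd h hjE
  done

end Key
section Graft

variable {I : Type*} [DecidableEq I]

open Finset

def graftClades (F : Forest I) (j : I) (N : Finset I) : Finset (Finset I) :=
  (F.clades.filter (fun D => ¬ N ⊂ D)) ∪
    ((F.clades.filter (fun D => N ⊂ D)).image (insert j)) ∪ {insert j N}

lemma mem_graftClades {F : Forest I} {j : I} {N X : Finset I} :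
    X ∈ graftClades F j N ↔
      (X ∈ F.clades ∧ ¬ N ⊂ X) ∨ (∃ C ∈ F.clades, N ⊂ C ∧ X = insert j C) ∨
        X = insert j N := by
  simp only [graftClades, Finset.mem_union, Finset.mem_image, Finset.mem_filter,
    Finset.mem_singleton]
  constructor
  · rintro ((h | ⟨C, ⟨hC, hNC⟩, rfl⟩) | h)
    · exact Or.inl h
    · exact Or.inr (Or.inl ⟨C, hC, hNC, rfl⟩)
    · exact Or.inr (Or.inr h)
  · rintro (h | ⟨C, hC, hNC, rfl⟩ | h)
    · exact Or.inl (Or.inl h)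
    · exact Or.inl (Or.inr ⟨C, ⟨hC, hNC⟩, rfl⟩)
    · exact Or.inr h

section withHyps

variable {F : Forest I} {i j : I} {N : Finset I}
  (hN : N = {i} ∨ (N ∈ F.clades ∧ i ∈ N))
  (hjF : ∀ C ∈ F.clades, j ∉ C) (hij : i ≠ j)

include hN hij hjF

lemma graft_iN : i ∈ N := by
  rcases hN with rfl | ⟨_, h⟩
  · exact Finset.mem_singleton_self i
  · exact h

lemma graft_jN : j ∉ N := by
  rcases hN with rfl | ⟨h, _⟩
  · exact fun h => hij (Finset.mem_singleton.mp h).symm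
  · exact hjF N h

lemma graft_Nne : N.Nonempty := ⟨i, graft_iN hN hjF hij⟩

lemma graft_ncompat : ∀ A, (A ∈ F.clades ∨ ∃ x, A = {x}) →
    N ⊆ A ∨ A ⊆ N ∨ Disjoint N A := by
  intro A hA
  rcases hN with rfl | ⟨hNc, _⟩
  · by_cases hi : i ∈ A
    · exact Or.inl (Finset.singleton_subset_iff.mpr hi)
    · exact Or.inr (Or.inr (Finset.disjoint_singleton_left.mpr hi))
  · rcases hA with hAc | ⟨x, rfl⟩
    · exact F.laminar N hNc A hAc
    · by_cases hx : x ∈ N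
      · exact Or.inr (Or.inl (Finset.singleton_subset_iff.mpr hx))
      · exact Or.inr (Or.inr (Finset.disjoint_singleton_right.mpr hx))

lemma graft_laminar : ∀ C ∈ graftClades F j N, ∀ D ∈ graftClades F j N,
    C ⊆ D ∨ D ⊆ C ∨ Disjoint C D := by
  have hjN := graft_jN hN hjF hij
  have hNne := graft_Nne hN hjF hij
  intro X hX Y hY
  rcases mem_graftClades.mp hX with ⟨hXc, hXn⟩ | ⟨C, hC, hNC, rfl⟩ | rfl <;>
    rcases mem_graftClades.mp hY with ⟨hYc, hYn⟩ | ⟨D, hD, hND, rfl⟩ | rfl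
  · exact F.laminar X hXc Y hYc
  · -- X old clade, Y = insert j D
    rcases F.laminar X hXc D hD with h | h | h
    · exact Or.inl (h.trans (Finset.subset_insert j D))
    · exact absurd (Finset.ssubset_of_ssubset_of_subset hND h) hXn
    · exact Or.inr (Or.inr (Finset.disjoint_insert_right.mpr ⟨hjF X hXc, h⟩))
  · -- X old clade, Y = insert j N
    rcases graft_ncompat hN hjF hij X (Or.inl hXc) with h | h | h
    · by_cases hXN : N = X
      · exact Or.inl (hXN ▸ Finset.subset_insert j N)
      · exact absurd ⟨h, fun h' => hXN (Finset.Subset.antisymm h h')⟩ hXn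
    · exact Or.inl (h.trans (Finset.subset_insert j N))
    · exact Or.inr (Or.inr (Finset.disjoint_insert_right.mpr ⟨hjF X hXc, h.symm⟩))
  · -- X = insert j C, Y old clade
    rcases F.laminar Y hYc C hC with h | h | h
    · exact Or.inr (Or.inl (h.trans (Finset.subset_insert j C)))
    · exact absurd (Finset.ssubset_of_ssubset_of_subset hNC h) hYn
    · exact Or.inr (Or.inr (Finset.disjoint_insert_left.mpr ⟨hjF Y hYc, h.symm⟩))
  · -- X = insert j C, Y = insert j D
    rcases F.laminar C hC D hD with h | h | h
    · exact Or.inl (Finset.insert_subset_insert j h)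
    · exact Or.inr (Or.inl (Finset.insert_subset_insert j h))
    · obtain ⟨x, hx⟩ := hNne
      exact absurd (h.mono hNC.subset hND.subset)
        (fun h' => Finset.disjoint_left.mp h' hx hx)
  · -- X = insert j C, Y = insert j N
    exact Or.inr (Or.inl (Finset.insert_subset_insert j hNC.subset))
  · -- X = insert j N, Y old clade
    rcases graft_ncompat hN hjF hij Y (Or.inl hYc) with h | h | h
    · by_cases hYN : N = Y
      · exact Or.inr (Or.inl (hYN ▸ Finset.subset_insert j N))
      · exact absurd ⟨h, fun h' => hYN (Finset.Subset.antisymm h h')⟩ hYn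
    · exact Or.inr (Or.inl (h.trans (Finset.subset_insert j N)))
    · exact Or.inr (Or.inr (Finset.disjoint_insert_left.mpr ⟨hjF Y hYc, h⟩))
  · -- X = insert j N, Y = insert j D
    exact Or.inl (Finset.insert_subset_insert j hND.subset)
  · exact Or.inl (Finset.Subset.refl _)

lemma graft_binary : ∀ C ∈ graftClades F j N, ∃ A B : Finset I,
    (A ∈ graftClades F j N ∨ ∃ x, A = {x}) ∧ (B ∈ graftClades F j N ∨ ∃ x, B = {x}) ∧
    Disjoint A B ∧ A ∪ B = C ∧ A ≠ C ∧ B ≠ C := by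
  have hjN := graft_jN hN hjF hij
  have hNne := graft_Nne hN hjF hij
  have hiN := graft_iN hN hjF hij
  intro X hX
  rcases mem_graftClades.mp hX with ⟨hXc, hXn⟩ | ⟨D, hD, hND, rfl⟩ | rfl
  · -- old clade: use F's split
    obtain ⟨A, B, hA, hB, hd, hU, hAne, hBne⟩ := F.binary X hXc
    refine ⟨A, B, ?_, ?_, hd, hU, hAne, hBne⟩
    · rcases hA with hA | h
      · refine Or.inl (mem_graftClades.mpr (Or.inl ⟨hA, fun h => ?_⟩))
        exact hXn (Finset.ssubset_of_ssubset_of_subset h (hU ▸ Finset.subset_union_left))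
      · exact Or.inr h
    · rcases hB with hB | h
      · refine Or.inl (mem_graftClades.mpr (Or.inl ⟨hB, fun h => ?_⟩))
        exact hXn (Finset.ssubset_of_ssubset_of_subset h (hU ▸ Finset.subset_union_right))
      · exact Or.inr h
  · -- X = insert j D with N ⊂ D
    obtain ⟨A, B, hA, hB, hd, hU, hAne, hBne⟩ := F.binary D hD
    have hjD : j ∉ D := hjF D hD
    have hjA : j ∉ A := fun h => hjD ((hU ▸ Finset.subset_union_left) h)
    have hjB : j ∉ B := fun h => hjD ((hU ▸ Finset.subset_union_right) h)
    have hsplitN : N ⊆ A ∨ N ⊆ B :=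
      sub_split hd hU hND.subset hND.ne
        (graft_ncompat hN hjF hij A hA) (graft_ncompat hN hjF hij B hB)
    rcases hsplitN with hNA | hNB
    · refine ⟨insert j A, B, ?_, ?_, ?_, ?_, ?_, ?_⟩
      · refine Or.inl (mem_graftClades.mpr ?_)
        by_cases hNAeq : N = A
        · exact Or.inr (Or.inr (by rw [hNAeq]))
        · have hNA' : N ⊂ A := ⟨hNA, fun h => hNAeq (Finset.Subset.antisymm hNA h)⟩
          rcases hA with hAc | ⟨x, rfl⟩
          · exact Or.inr (Or.inl ⟨A, hAc, hNA', rfl⟩)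
          · exfalso
            rcases Finset.subset_singleton_iff.mp hNA with h | h
            · exact hNne.ne_empty h
            · exact hNAeq h
      · rcases hB with hBc | h
        · refine Or.inl (mem_graftClades.mpr (Or.inl ⟨hBc, fun h => ?_⟩))
          obtain ⟨x, hx⟩ := hNne
          exact Finset.disjoint_left.mp hd (hNA hx) (h.subset hx)
        · exact Or.inr h
      · exact Finset.disjoint_insert_left.mpr ⟨hjB, hd⟩
      · rw [Finset.insert_union, hU]
      · intro h
        have : A = D := by
          have := congrArg (fun s => Finset.erase s j) h
          simpa [Finset.erase_insert hjA, Finset.erase_insert hjD] using this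
        exact hAne this
      · intro h
        exact hjB (h ▸ Finset.mem_insert_self j D)
    · refine ⟨A, insert j B, ?_, ?_, ?_, ?_, ?_, ?_⟩
      · rcases hA with hAc | h
        · refine Or.inl (mem_graftClades.mpr (Or.inl ⟨hAc, fun h => ?_⟩))
          obtain ⟨x, hx⟩ := hNne
          exact Finset.disjoint_left.mp hd (h.subset hx) (hNB hx)
        · exact Or.inr h
      · refine Or.inl (mem_graftClades.mpr ?_)
        by_cases hNBeq : N = B
        · exact Or.inr (Or.inr (by rw [hNBeq]))
        · have hNB' : N ⊂ B := ⟨hNB, fun h => hNBeq (Finset.Subset.antisymm hNB h)⟩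
          rcases hB with hBc | ⟨x, rfl⟩
          · exact Or.inr (Or.inl ⟨B, hBc, hNB', rfl⟩)
          · exfalso
            rcases Finset.subset_singleton_iff.mp hNB with h | h
            · exact hNne.ne_empty h
            · exact hNBeq h
      · exact Finset.disjoint_insert_right.mpr ⟨hjA, hd⟩
      · rw [Finset.union_insert, hU]
      · intro h
        exact hjA (h ▸ Finset.mem_insert_self j D)
      · intro h
        have : B = D := by
          have := congrArg (fun s => Finset.erase s j) h
          simpa [Finset.erase_insert hjB, Finset.erase_insert hjD] using this
        exact hBne this
  · -- X = insert j N
    refine ⟨N, {j}, ?_, Or.inr ⟨j, rfl⟩, ?_, ?_, ?_, ?_⟩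
    · rcases hN with h | ⟨hNc, _⟩
      · exact Or.inr ⟨i, h⟩
      · exact Or.inl (mem_graftClades.mpr (Or.inl ⟨hNc, fun h => (ssubset_irrefl N) h⟩))
    · exact Finset.disjoint_singleton_right.mpr hjN
    · rw [Finset.union_comm, ← Finset.insert_eq]
    · intro h
      exact hjN (h ▸ Finset.mem_insert_self j N)
    · intro h
      have : i ∈ ({j} : Finset I) := h ▸ Finset.mem_insert_of_mem (graft_iN hN hjF hij)
      exact hij (Finset.mem_singleton.mp this)

end withHyps

def graftF [Fintype I] (F : Forest I) (i j : I) (N : Finset I)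
    (hN : N = {i} ∨ (N ∈ F.clades ∧ i ∈ N))
    (hjF : ∀ C ∈ F.clades, j ∉ C) (hij : i ≠ j) : Forest I where
  ground := Finset.univ
  clades := graftClades F j N
  subset_ground := fun C _ => Finset.subset_univ C
  laminar := graft_laminar hN hjF hij
  binary := graft_binary hN hjF hij

end Graft
section Main

variable {I : Type*} [DecidableEq I] [Fintype I]

open Finset

lemma forward_lemma (F F' : Forest I) (i j : I) (hij : i ≠ j)
    (hjF : ∀ C ∈ F.clades, j ∉ C)
    (h : ∃ V1 V2 : Finset (Finset I), Disjoint V1 V2 ∧ V1 ∪ V2 = F'.clades ∧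
        F ∈ Forest.gamma F' V1 ∧ pairForest I i j hij ∈ Forest.gamma F' V2) :
    ∃ N : Finset I, (N = {i} ∨ (N ∈ F.clades ∧ i ∈ N)) ∧
      F'.clades = graftClades F j N := by
  obtain ⟨V1, V2, hdisj, hun, hF, hY⟩ := h
  obtain ⟨hgr1, φ, hinj, hmem, hsub, hmono, himg⟩ := hF
  obtain ⟨hgr2, ψ, _, hψmem, hψsub, _, hψimg⟩ := hY
  have hYclades : (pairForest I i j hij).clades = {({i, j} : Finset I)} := rfl
  rw [hYclades] at hψmem hψsub hψimg
  set M := ψ {i, j} with hMdef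
  have hV2 : V2 = {M} := by rw [← hψimg, Finset.image_singleton]
  have hM' : M ∈ F'.clades := hψmem _ (Finset.mem_singleton_self _)
  have hijM : ({i, j} : Finset I) ⊆ M := hψsub _ (Finset.mem_singleton_self _)
  have hiM : i ∈ M := hijM (Finset.mem_insert_self i {j})
  have hjM : j ∈ M := hijM (Finset.mem_insert_of_mem (Finset.mem_singleton_self j))
  have hMim : M ∉ F.clades.image φ := by
    rw [himg]
    exact Finset.disjoint_right.mp hdisj (hV2 ▸ Finset.mem_singleton_self M)
  have hcl : F'.clades = insert M (F.clades.image φ) := by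
    rw [← hun, himg, hV2, Finset.insert_eq, Finset.union_comm]
  have hkey := key_lemma F F' j M φ hjF hM' hjM hinj hmem hsub hmono hMim hcl
  -- the split of M
  obtain ⟨A, B, hA, hB, hdAB, hUAB, hAne, hBne⟩ := F'.binary M hM'
  have hsingle : ∀ A' B' : Finset I, (A' ∈ F'.clades ∨ ∃ x, A' = {x}) →
      A' ∪ B' = M → A' ≠ M → j ∈ A' → A' = {j} := by
    intro A' B' hA' hU' hA'ne hjA'
    have hA'M : A' ⊆ M := hU' ▸ Finset.subset_union_left
    rcases hA' with hA'cl | ⟨x, rfl⟩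
    · exfalso
      rw [hcl] at hA'cl
      rcases Finset.mem_insert.mp hA'cl with h | h
      · exact hA'ne h
      · obtain ⟨D, hD, rfl⟩ := Finset.mem_image.mp h
        have := (hkey D hD).2 hjA'
        exact (ssubset_irrefl M) (Finset.ssubset_of_ssubset_of_subset this hA'M)
    · rw [Finset.mem_singleton.mp hjA']
  have hNcs : (M.erase j ∈ F'.clades ∨ ∃ x, M.erase j = {x}) := by
    have herase : ∀ A' B' : Finset I, Disjoint A' B' → A' ∪ B' = M → A' = {j} →
        B' = M.erase j := by
      intro A' B' hd hU hAj
      subst hAj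
      ext x
      simp only [Finset.mem_erase]
      constructor
      · intro hx
        refine ⟨?_, hU ▸ Finset.mem_union_right _ hx⟩
        rintro rfl
        exact Finset.disjoint_left.mp hd (Finset.mem_singleton_self _) hx
      · rintro ⟨hxj, hxM⟩
        rcases Finset.mem_union.mp (hU ▸ hxM : x ∈ {j} ∪ B') with h | h
        · exact absurd (Finset.mem_singleton.mp h) hxj
        · exact h
    rcases Finset.mem_union.mp (hUAB ▸ hjM : j ∈ A ∪ B) with hjA | hjB
    · have hAj : A = {j} := hsingle A B hA hUAB hAne hjA
      rw [← herase A B hdAB hUAB hAj]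
      exact hB
    · have hBj : B = {j} := hsingle B A hB (by rw [Finset.union_comm, hUAB]) hBne hjB
      rw [← herase B A hdAB.symm (by rw [Finset.union_comm, hUAB]) hBj]
      exact hA
  set N := M.erase j with hNdef
  have hiN : i ∈ N := Finset.mem_erase.mpr ⟨hij, hiM⟩
  have hjN : j ∉ N := Finset.notMem_erase j M
  have hMeq : M = insert j N := (Finset.insert_erase hjM).symm
  have hNprop : N = {i} ∨ (N ∈ F.clades ∧ i ∈ N) := by
    rcases hNcs with hNcl | ⟨x, hx⟩
    · right
      rw [hcl] at hNcl
      rcases Finset.mem_insert.mp hNcl with h | h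
      · exact absurd (h ▸ hjM) hjN
      · obtain ⟨D, hD, hDN⟩ := Finset.mem_image.mp h
        have h1 := (hkey D hD).1
        rw [hDN] at h1
        have : N \ {j} = N := by
          rw [Finset.sdiff_singleton_eq_erase, Finset.erase_eq_of_notMem hjN]
        rw [this] at h1
        exact ⟨h1 ▸ hD, hiN⟩
    · left
      rw [hx] at hiN ⊢
      rw [← Finset.mem_singleton.mp hiN]
  have hφeq : ∀ C ∈ F.clades, (j ∈ φ C → φ C = insert j C) ∧ (j ∉ φ C → φ C = C) := by
    intro C hC
    have h1 := (hkey C hC).1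
    constructor
    · intro hj'
      rw [Finset.sdiff_singleton_eq_erase] at h1
      conv_lhs => rw [← Finset.insert_erase hj']
      rw [h1]
    · intro hj'
      rw [Finset.sdiff_singleton_eq_erase, Finset.erase_eq_of_notMem hj'] at h1
      exact h1
  have hJchar : ∀ C ∈ F.clades, (j ∈ φ C ↔ N ⊂ C) := by
    intro C hC
    constructor
    · intro hj'
      have hMlt : M ⊂ φ C := (hkey C hC).2 hj'
      have hφC : φ C = insert j C := (hφeq C hC).1 hj'
      refine Finset.ssubset_iff_subset_ne.mpr ⟨?_, ?_⟩
      · intro x hx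
        have hxM : x ∈ M := hMeq ▸ Finset.mem_insert_of_mem hx
        have : x ∈ insert j C := hφC ▸ hMlt.subset hxM
        rcases Finset.mem_insert.mp this with h | h
        · exact absurd (h ▸ hx) hjN
        · exact h
      · intro hNCeq
        apply hMlt.ne
        rw [hMeq, hφC, hNCeq]
    · intro hNC
      by_contra hj'
      have hφC : φ C = C := (hφeq C hC).2 hj'
      have hC' : C ∈ F'.clades := hφC ▸ hmem C hC
      rcases F'.laminar M hM' C hC' with h | h | h
      · exact hjF C hC (h hjM)
      · refine hNC.not_subset ?_
        intro x hx
        have : x ∈ insert j N := hMeq ▸ h hx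
        rcases Finset.mem_insert.mp this with rfl | h'
        · exact absurd hx (hjF C hC)
        · exact h'
      · exact Finset.disjoint_left.mp h (hMeq ▸ Finset.mem_insert_of_mem hiN)
          (hNC.subset hiN)
  refine ⟨N, hNprop, ?_⟩
  rw [hcl]
  ext X
  constructor
  · intro hX
    rcases Finset.mem_insert.mp hX with rfl | hXim
    · exact mem_graftClades.mpr (Or.inr (Or.inr hMeq))
    · obtain ⟨C, hC, rfl⟩ := Finset.mem_image.mp hXim
      by_cases hNC : N ⊂ C
      · exact mem_graftClades.mpr (Or.inr (Or.inl ⟨C, hC, hNC,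
          (hφeq C hC).1 ((hJchar C hC).mpr hNC)⟩))
      · refine mem_graftClades.mpr (Or.inl ⟨?_, ?_⟩)
        · rw [(hφeq C hC).2 (fun h => hNC ((hJchar C hC).mp h))]; exact hC
        · rw [(hφeq C hC).2 (fun h => hNC ((hJchar C hC).mp h))]; exact hNC
  · intro hX
    rcases mem_graftClades.mp hX with ⟨hXc, hXn⟩ | ⟨C, hC, hNC, rfl⟩ | rfl
    · refine Finset.mem_insert_of_mem (Finset.mem_image.mpr ⟨X, hXc, ?_⟩)
      exact (hφeq X hXc).2 (fun h => hXn ((hJchar X hXc).mp h))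
    · refine Finset.mem_insert_of_mem (Finset.mem_image.mpr ⟨C, hC, ?_⟩)
      exact (hφeq C hC).1 ((hJchar C hC).mpr hNC)
    · exact hMeq ▸ Finset.mem_insert_self M _

lemma backward_lemma (F F' : Forest I) (i j : I) (hij : i ≠ j) (N : Finset I)
    (hg : F.ground = Finset.univ) (hg' : F'.ground = Finset.univ)
    (hjF : ∀ C ∈ F.clades, j ∉ C)
    (hN : N = {i} ∨ (N ∈ F.clades ∧ i ∈ N))
    (hcl : F'.clades = graftClades F j N) :
    ∃ V1 V2 : Finset (Finset I), Disjoint V1 V2 ∧ V1 ∪ V2 = F'.clades ∧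
      F ∈ Forest.gamma F' V1 ∧ pairForest I i j hij ∈ Forest.gamma F' V2 := by
  have hjN := graft_jN hN hjF hij
  have hiN := graft_iN hN hjF hij
  set φ : Finset I → Finset I := fun C => if N ⊂ C then insert j C else C with hφdef
  refine ⟨F.clades.image φ, {insert j N}, ?_, ?_, ?_, ?_⟩
  · rw [Finset.disjoint_singleton_right]
    intro h
    obtain ⟨C, hC, hφC⟩ := Finset.mem_image.mp h
    by_cases hNC : N ⊂ C
    · rw [hφdef] at hφC
      simp only [if_pos hNC] at hφC
      have : C = N := by
        have := congrArg (fun s => Finset.erase s j) hφC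
        simpa [Finset.erase_insert (hjF C hC), Finset.erase_insert hjN] using this
      exact hNC.ne this.symm
    · rw [hφdef] at hφC
      simp only [if_neg hNC] at hφC
      exact hjF C hC (hφC ▸ Finset.mem_insert_self j N)
  · rw [hcl]
    ext X
    simp only [Finset.mem_union, Finset.mem_singleton]
    constructor
    · rintro (hX | rfl)
      · obtain ⟨C, hC, rfl⟩ := Finset.mem_image.mp hX
        rw [hφdef]
        by_cases hNC : N ⊂ C
        · simp only [if_pos hNC]
          exact mem_graftClades.mpr (Or.inr (Or.inl ⟨C, hC, hNC, rfl⟩))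
        · simp only [if_neg hNC]
          exact mem_graftClades.mpr (Or.inl ⟨hC, hNC⟩)
      · exact mem_graftClades.mpr (Or.inr (Or.inr rfl))
    · intro hX
      rcases mem_graftClades.mp hX with ⟨hXc, hXn⟩ | ⟨C, hC, hNC, rfl⟩ | rfl
      · refine Or.inl (Finset.mem_image.mpr ⟨X, hXc, ?_⟩)
        rw [hφdef]; simp only [if_neg hXn]
      · refine Or.inl (Finset.mem_image.mpr ⟨C, hC, ?_⟩)
        rw [hφdef]; simp only [if_pos hNC]
      · exact Or.inr rfl
  · refine ⟨by rw [hg, hg'], φ, ?_, ?_, ?_, ?_, rfl⟩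
    · intro C hC D hD heq
      simp only [Finset.mem_coe] at hC hD
      rw [hφdef] at heq
      simp only at heq
      by_cases hNC : N ⊂ C <;> by_cases hND : N ⊂ D
      · rw [if_pos hNC, if_pos hND] at heq
        have := congrArg (fun s => Finset.erase s j) heq
        simpa [Finset.erase_insert (hjF C hC), Finset.erase_insert (hjF D hD)] using this
      · rw [if_pos hNC, if_neg hND] at heq
        exact absurd (heq ▸ Finset.mem_insert_self j C) (hjF D hD)
      · rw [if_neg hNC, if_pos hND] at heq
        exact absurd (heq.symm ▸ Finset.mem_insert_self j D) (hjF C hC)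
      · rwa [if_neg hNC, if_neg hND] at heq
    · intro C hC
      rw [hcl, hφdef]
      by_cases hNC : N ⊂ C
      · simp only [if_pos hNC]
        exact mem_graftClades.mpr (Or.inr (Or.inl ⟨C, hC, hNC, rfl⟩))
      · simp only [if_neg hNC]
        exact mem_graftClades.mpr (Or.inl ⟨hC, hNC⟩)
    · intro C hC
      rw [hφdef]
      by_cases hNC : N ⊂ C
      · simp only [if_pos hNC]; exact Finset.subset_insert j C
      · simp only [if_neg hNC]
        exact Finset.Subset.refl C
    · intro C hC D hD hCD
      rw [hφdef]
      by_cases hNC : N ⊂ C <;> by_cases hND : N ⊂ D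
      · simp only [if_pos hNC, if_pos hND]
        exact Finset.insert_subset_insert j hCD
      · exact absurd (Finset.ssubset_of_ssubset_of_subset hNC hCD) hND
      · simp only [if_neg hNC, if_pos hND]
        exact hCD.trans (Finset.subset_insert j D)
      · simp only [if_neg hNC, if_neg hND]
        exact hCD
  · refine ⟨by rw [hg']; rfl, fun _ => insert j N, ?_, ?_, ?_, ?_, ?_⟩
    · intro a ha b hb _
      have hYclades : (pairForest I i j hij).clades = {({i, j} : Finset I)} := rfl
      rw [hYclades] at ha hb
      simp only [Finset.coe_singleton, Set.mem_singleton_iff] at ha hb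
      rw [ha, hb]
    · intro C _
      rw [hcl]
      exact mem_graftClades.mpr (Or.inr (Or.inr rfl))
    · intro C hC
      have : C = ({i, j} : Finset I) := Finset.mem_singleton.mp hC
      rw [this]
      intro x hx
      rcases Finset.mem_insert.mp hx with rfl | hx'
      · exact Finset.mem_insert_of_mem hiN
      · rw [Finset.mem_singleton.mp hx']
        exact Finset.mem_insert_self j N
    · intro C _ D _ _
      exact Finset.Subset.refl _
    · rfl

lemma graftClades_inj (F : Forest I) {j : I} {N₁ N₂ : Finset I}
    (hjF : ∀ C ∈ F.clades, j ∉ C) (hjN₁ : j ∉ N₁) (hjN₂ : j ∉ N₂)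
    (h : graftClades F j N₁ = graftClades F j N₂) : N₁ = N₂ := by
  have step : ∀ (N N' : Finset I), j ∉ N → j ∉ N' →
      insert j N ∈ graftClades F j N' → N = N' ∨ N' ⊂ N := by
    intro N N' hjN hjN' hmem
    rcases mem_graftClades.mp hmem with ⟨hXc, _⟩ | ⟨C, hC, hNC, heq⟩ | heq
    · exact absurd (Finset.mem_insert_self j N) (fun hh => hjF _ hXc hh)
    · have : N = C := by
        have := congrArg (fun s => Finset.erase s j) heq
        simpa [Finset.erase_insert hjN, Finset.erase_insert (hjF C hC)] using this
      refine Or.inr (by rw [this]; exact hNC)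
    · have : N = N' := by
        have := congrArg (fun s => Finset.erase s j) heq
        simpa [Finset.erase_insert hjN, Finset.erase_insert hjN'] using this
      exact Or.inl this
  have h₁ : insert j N₁ ∈ graftClades F j N₂ :=
    h ▸ mem_graftClades.mpr (Or.inr (Or.inr rfl))
  have h₂ : insert j N₂ ∈ graftClades F j N₁ :=
    h ▸ mem_graftClades.mpr (Or.inr (Or.inr rfl))
  rcases step N₁ N₂ hjN₁ hjN₂ h₁ with heq | hlt₁
  · exact heq
  rcases step N₂ N₁ hjN₂ hjN₁ h₂ with heq | hlt₂
  · exact heq.symm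
  · exact absurd (hlt₁.trans hlt₂) (ssubset_irrefl N₂)

lemma Forest.ext' {F G : Forest I} (h1 : F.ground = G.ground)
    (h2 : F.clades = G.clades) : F = G := by
  cases F; cases G
  simp only [Forest.mk.injEq]
  exact ⟨h1, h2⟩

end Main
/-- let `F` be a forest with `j ∉ Supp F`. The forests `F'` with
`V(F') = V(F) ⊔ {v}`, `F ∈ γ(F', V(F))` and `Y i j ∈ γ(F', {v})` are exactly
those obtained from `F` by grafting the leaf `j` onto one of the edges of the
path from `i` to its root (the edge below a node `N` on that path, `N` being
`{i}` or a clade containing `i`; the clades strictly above `N` acquire the new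
leaf `j` and the new vertex has clade `N ∪ {j}`). In particular there are
exactly `d(i,F) + 1` such forests. -/
theorem stmt_14 (I : Type*) [Fintype I] [DecidableEq I] (i j : I) (hij : i ≠ j)
    (F : Forest I) (hg : F.ground = Finset.univ) (hj : j ∉ F.supp) :
    (∀ F' : Forest I, F'.ground = Finset.univ →
      ((∃ V1 V2 : Finset (Finset I), Disjoint V1 V2 ∧ V1 ∪ V2 = F'.clades ∧
          F ∈ Forest.gamma F' V1 ∧ pairForest I i j hij ∈ Forest.gamma F' V2) ↔
        (∃ N : Finset I, (N = {i} ∨ (N ∈ F.clades ∧ i ∈ N)) ∧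
          F'.clades = (F.clades.filter (fun D => ¬ N ⊂ D)) ∪
            ((F.clades.filter (fun D => N ⊂ D)).image (insert j)) ∪
            {insert j N}))) ∧
    Nat.card {F' : Forest I // F'.ground = Finset.univ ∧
        ∃ V1 V2 : Finset (Finset I), Disjoint V1 V2 ∧ V1 ∪ V2 = F'.clades ∧
          F ∈ Forest.gamma F' V1 ∧ pairForest I i j hij ∈ Forest.gamma F' V2}
      = (F.clades.filter (fun C => i ∈ C)).card + 1 := by
  have hsupp : ∀ C ∈ F.clades, C ⊆ F.supp := fun C hC => Finset.le_sup (f := id) hC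
  have hjF : ∀ C ∈ F.clades, j ∉ C := fun C hC hjC => hj (hsupp C hC hjC)
  constructor
  · intro F' hgF'
    constructor
    · intro h
      obtain ⟨N, hN, hcl⟩ := forward_lemma F F' i j hij hjF h
      exact ⟨N, hN, hcl⟩
    · rintro ⟨N, hN, hcl⟩
      exact backward_lemma F F' i j hij N hg hgF' hjF hN hcl
  · set g : {N : Finset I // N = {i} ∨ (N ∈ F.clades ∧ i ∈ N)} →
        {F' : Forest I // F'.ground = Finset.univ ∧
          ∃ V1 V2 : Finset (Finset I), Disjoint V1 V2 ∧ V1 ∪ V2 = F'.clades ∧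
            F ∈ Forest.gamma F' V1 ∧ pairForest I i j hij ∈ Forest.gamma F' V2} :=
      fun x => ⟨graftF F i j x.1 x.2 hjF hij, rfl,
        backward_lemma F (graftF F i j x.1 x.2 hjF hij) i j hij x.1 hg rfl hjF x.2 rfl⟩
      with hgdef
    have hbij : Function.Bijective g := by
      constructor
      · rintro ⟨N₁, h₁⟩ ⟨N₂, h₂⟩ h
        apply Subtype.ext
        have hcl : graftClades F j N₁ = graftClades F j N₂ :=
          congrArg (fun x => (Subtype.val x).clades) h
        exact graftClades_inj F hjF (graft_jN h₁ hjF hij) (graft_jN h₂ hjF hij) hcl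
      · rintro ⟨F', hgF', hprop⟩
        obtain ⟨N, hN, hcl⟩ := forward_lemma F F' i j hij hjF hprop
        refine ⟨⟨N, hN⟩, ?_⟩
        apply Subtype.ext
        exact Forest.ext' (by rw [hgF']; rfl) hcl.symm
    rw [← Nat.card_eq_of_bijective g hbij]
    have hiff : ∀ N : Finset I, (N = {i} ∨ (N ∈ F.clades ∧ i ∈ N)) ↔
        N ∈ insert ({i} : Finset I) (F.clades.filter (fun C => i ∈ C)) := by
      intro N
      simp only [Finset.mem_insert, Finset.mem_filter]
    rw [Nat.card_congr (Equiv.subtypeEquivRight hiff)]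
    rw [Nat.card_eq_finsetCard]
    rw [Finset.card_insert_of_notMem]
    intro h
    have h1 := (Finset.mem_filter.mp h).1
    have := F.two_le_card h1
    simp at this
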